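/- For all n ≥ 2, the number of edges counted over all root-to-leaf paths in all plane (ordered) trees on n vertices equals 4^(n-2). Equivalently, the sum over all plane trees T on n vertices of the sum over leaves l of T of the distance from the root to l equals 4^(n-2). -/

import Mathlib

inductive PlaneTree : Type where
  | node : List PlaneTree → PlaneTree

namespace PlaneTree

mutual
def size : PlaneTree → ℕ
  | .node ts => 1 + sizeList ts
def sizeList : List PlaneTree → ℕ
  | [] => 0
  | t :: ts => size t + sizeList ts
end

mutual
def positions : PlaneTree → List (List ℕ)
  | .node ts => [] :: positionsList 0 ts
def positionsList : ℕ → List PlaneTree → List (List ℕ)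
  | _, [] => []
  | i, t :: ts => (positions t).map (i :: ·) ++ positionsList (i+1) ts
end

mutual
def leafPositions : PlaneTree → List (List ℕ)
  | .node [] => [[]]
  | .node (t :: ts) => leafList 0 (t :: ts)
def leafList : ℕ → List PlaneTree → List (List ℕ)
  | _, [] => []
  | i, t :: ts => (leafPositions t).map (i :: ·) ++ leafList (i+1) ts
end

def isPrefixB : List ℕ → List ℕ → Bool
  | [], _ => true
  | _ :: _, [] => false
  | a :: as, b :: bs => a == b && isPrefixB as bs

def lcpLen : List ℕ → List ℕ → ℕ
  | a :: as, b :: bs => if a = b then 1 + lcpLen as bs else 0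
  | _, _ => 0

/-- number of edges on the path between two vertices given by positions -/
def pathDist (p q : List ℕ) : ℕ :=
  (p.length - lcpLen p q) + (q.length - lcpLen p q)

/-- number of vertical paths (vertex, proper descendant) in a tree -/
def verticalPairs (T : PlaneTree) : ℕ :=
  ((positions T).map (fun q =>
    ((positions T).filter (fun p => p != q && isPrefixB p q)).length)).sum

/-- total number of edges over all vertical paths in a tree -/
def verticalEdges (T : PlaneTree) : ℕ :=
  ((positions T).map (fun q =>
    (((positions T).filter (fun p => p != q && isPrefixB p q)).map
      (fun p => q.length - p.length)).sum)).sum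

/-- number of (unordered) paths between distinct vertices -/
def pathCount (T : PlaneTree) : ℕ := ((positions T).sublistsLen 2).length

/-- Wiener index: sum of distances over unordered pairs of distinct vertices -/
def wiener (T : PlaneTree) : ℕ :=
  (((positions T).sublistsLen 2).map (fun l =>
    match l with
    | [p, q] => pathDist p q
    | _ => 0)).sum

def forests : ℕ → List (List PlaneTree)
  | 0 => [[]]
  | m+1 => (List.range (m+1)).attach.flatMap fun k =>
      (forests k.1).flatMap fun g => (forests (m - k.1)).map fun f => node g :: f
decreasing_by
  · exact Nat.lt_succ_of_le (Nat.sub_le m k.1)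
  · exact Nat.lt_succ_of_le (Nat.le_of_lt_succ (List.mem_range.mp k.2))

lemma forests_zero : forests 0 = [[]] := by rw [forests]

lemma mem_forests : ∀ m (ts : List PlaneTree), ts ∈ forests m ↔ sizeList ts = m := by
  intro m
  induction m using Nat.strong_induction_on with
  | _ m ih =>
    match m with
    | 0 =>
      intro ts
      rw [forests]
      constructor
      · rintro h
        simp only [List.mem_singleton] at h
        subst h
        rfl
      · intro h
        match ts with
        | [] => simp [forests]
        | t :: ts =>
          exfalso
          match t with
          | node g => simp [sizeList, size] at h
    | m+1 =>
      intro ts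
      rw [forests]
      simp only [List.mem_flatMap, List.mem_map, List.mem_attach, true_and, Subtype.exists,
        List.mem_range]
      constructor
      · rintro ⟨k, hk, g, hg, f, hf, rfl⟩
        have h1 : sizeList g = k := (ih k hk g).mp hg
        have h2 : sizeList f = m - k := (ih (m-k) (Nat.lt_succ_of_le (Nat.sub_le m k)) f).mp hf
        simp [sizeList, size, h1, h2]
        omega
      · intro h
        match ts with
        | [] => simp [sizeList] at h
        | node g :: f =>
          have h' : (1 + sizeList g) + sizeList f = m + 1 := h
          refine ⟨sizeList g, by omega, g, ?_, f, ?_, rfl⟩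
          · exact (ih _ (by omega) g).mpr rfl
          · exact (ih _ (by omega) f).mpr (by omega)

lemma nodup_forests : ∀ m, (forests m).Nodup := by
  intro m
  induction m using Nat.strong_induction_on with
  | _ m ih =>
    match m with
    | 0 => rw [forests]; simp
    | m+1 =>
      rw [forests]
      rw [List.nodup_flatMap]
      constructor
      · rintro ⟨k, hk⟩ -
        rw [List.nodup_flatMap]
        have hk' := List.mem_range.mp hk
        constructor
        · intro g _
          exact ((ih (m-k) (by omega) ).map (fun a b h => by injection h))
        · refine (ih k (by omega)).imp ?_
          intro g₁ g₂ hne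
          simp only [Function.onFun, List.disjoint_left]
          rintro x hx₁ hx₂
          obtain ⟨f₁, _, rfl⟩ := List.mem_map.mp hx₁
          obtain ⟨f₂, _, h⟩ := List.mem_map.mp hx₂
          apply hne
          injection h with h1 h2
          injection h1 with h3
          exact h3.symm
      · -- pairwise disjoint over k: head size determines k
        refine (List.nodup_attach.mpr List.nodup_range).imp ?_
        rintro ⟨k₁, hk₁⟩ ⟨k₂, hk₂⟩ hne
        simp only [Function.onFun, List.disjoint_left]
        rintro x hx₁ hx₂
        simp only [List.mem_flatMap, List.mem_map] at hx₁ hx₂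
        obtain ⟨g₁, hg₁, f₁, hf₁, rfl⟩ := hx₁
        obtain ⟨g₂, hg₂, f₂, hf₂, h⟩ := hx₂
        apply hne
        have e1 : sizeList g₁ = k₁ := (mem_forests _ _).mp hg₁
        have e2 : sizeList g₂ = k₂ := (mem_forests _ _).mp hg₂
        have : g₂ = g₁ := by injection h with h1 h2; injection h1
        subst this
        simp only [Subtype.mk.injEq]
        omega

/-! ### statistics -/

def lc (t : PlaneTree) : ℕ := (leafPositions t).length
def dp (t : PlaneTree) : ℕ := ((leafPositions t).map List.length).sum

def As : List PlaneTree → ℕ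
  | [] => 0
  | t :: ts => lc t + As ts

def Ds : List PlaneTree → ℕ
  | [] => 0
  | t :: ts => (dp t + lc t) + Ds ts

lemma cons_map_sum (i : ℕ) (L : List (List ℕ)) :
    (L.map (List.length ∘ (i :: ·))).sum = (L.map List.length).sum + L.length := by
  induction L with
  | nil => rfl
  | cons p ps ih =>
    simp only [List.map_cons, List.sum_cons, List.length_cons, ih, Function.comp_apply,
      List.length_cons]
    omega

lemma leafList_stats : ∀ (ts : List PlaneTree) (i : ℕ),
    (leafList i ts).length = As ts ∧
    ((leafList i ts).map List.length).sum = Ds ts := by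
  intro ts
  induction ts with
  | nil => intro i; simp [leafList, As, Ds]
  | cons t ts ih =>
    intro i
    rw [leafList]
    constructor
    · simp [As, (ih (i+1)).1, lc]
    · simp only [List.map_append, List.map_map, List.sum_append]
      rw [Ds, (ih (i+1)).2, cons_map_sum]
      show ((leafPositions t).map List.length).sum + (leafPositions t).length + Ds ts
        = dp t + lc t + Ds ts
      rw [dp, lc]

lemma lc_node_nil : lc (node []) = 1 := rfl

lemma dp_node_nil : dp (node []) = 0 := rfl

lemma lc_node_cons (t : PlaneTree) (ts : List PlaneTree) : lc (node (t :: ts)) = As (t :: ts) := by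
  rw [lc, leafPositions]
  exact (leafList_stats (t :: ts) 0).1

lemma dp_node_cons (t : PlaneTree) (ts : List PlaneTree) : dp (node (t :: ts)) = Ds (t :: ts) := by
  rw [dp, leafPositions]
  exact (leafList_stats (t :: ts) 0).2

def Fn (m : ℕ) : ℕ := (forests m).length
def uS (m : ℕ) : ℕ := ((forests m).map As).sum
def vS (m : ℕ) : ℕ := ((forests m).map Ds).sum

lemma Fn_zero : Fn 0 = 1 := by rw [Fn, forests_zero]; rfl
lemma uS_zero : uS 0 = 0 := by rw [uS, forests_zero]; rfl
lemma vS_zero : vS 0 = 0 := by rw [vS, forests_zero]; rfl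

lemma sum_map_flatMap {α β : Type*} (l : List α) (f : α → List β) (g : β → ℕ) :
    ((l.flatMap f).map g).sum = (l.map fun a => (((f a).map g).sum)).sum := by
  induction l with
  | nil => simp
  | cons a l ih => simp [List.flatMap_cons, ih]

lemma listrange_sum (n : ℕ) (h : ℕ → ℕ) :
    ((List.range n).map h).sum = ∑ k ∈ Finset.range n, h k := by
  induction n with
  | zero => simp
  | succ n ih => simp [List.range_succ, Finset.sum_range_succ, ih]

lemma lmap_one {α : Type*} (l : List α) : (l.map fun _ => (1:ℕ)).sum = l.length := by
  induction l with
  | nil => rfl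
  | cons a l ih => simp [ih]; omega

lemma sum_forests_succ (m : ℕ) (g : List PlaneTree → ℕ) :
    ((forests (m+1)).map g).sum =
      ∑ k ∈ Finset.range (m+1),
        ((forests k).map fun G => (((forests (m-k)).map fun f => g (node G :: f)).sum)).sum := by
  rw [forests]
  rw [sum_map_flatMap]
  rw [List.attach_map_val (l := List.range (m+1))
    (f := fun k => ((((forests k).flatMap fun G => (forests (m - k)).map fun f => node G :: f).map g).sum))]
  rw [listrange_sum]
  refine Finset.sum_congr rfl fun k _ => ?_
  rw [sum_map_flatMap]
  simp only [List.map_map, Function.comp_def]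

lemma lmap_const {α : Type*} (l : List α) (c : ℕ) : (l.map fun _ => c).sum = l.length * c := by
  induction l with
  | nil => simp
  | cons a l ih => simp [ih]; ring

lemma sum_map_add {α : Type*} (l : List α) (p q : α → ℕ) :
    (l.map fun a => p a + q a).sum = (l.map p).sum + (l.map q).sum := by
  induction l with
  | nil => rfl
  | cons a l ih => simp [ih]; omega

lemma lmap_mul_right {α : Type*} (l : List α) (p : α → ℕ) (c : ℕ) :
    (l.map fun a => p a * c).sum = (l.map p).sum * c := by
  induction l with
  | nil => simp
  | cons a l ih => simp [ih]; ring

lemma Fn_succ (m : ℕ) : Fn (m+1) = ∑ k ∈ Finset.range (m+1), Fn k * Fn (m-k) := by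
  rw [Fn, ← lmap_one (forests (m+1)), sum_forests_succ]
  refine Finset.sum_congr rfl fun k _ => ?_
  calc ((forests k).map fun _ => ((forests (m-k)).map fun _ => 1).sum).sum
      = ((forests k).map fun _ => Fn (m-k)).sum := by
        refine congrArg List.sum (List.map_congr_left fun G _ => ?_)
        rw [lmap_one]; rfl
    _ = Fn k * Fn (m-k) := by rw [lmap_const]; rfl

lemma Lt_eq (k : ℕ) :
    ((forests k).map fun G => lc (node G)).sum = uS k + (if k = 0 then 1 else 0) := by
  match k with
  | 0 => rw [forests_zero]; simp [lc_node_nil, uS_zero]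
  | k+1 =>
    simp only [if_neg (Nat.succ_ne_zero k), add_zero, uS]
    refine congrArg List.sum (List.map_congr_left fun G hG => ?_)
    have hs : sizeList G = k+1 := (mem_forests _ _).mp hG
    match G with
    | [] => simp [sizeList] at hs
    | t :: ts => rw [lc_node_cons]

lemma Dt_eq (k : ℕ) :
    ((forests k).map fun G => dp (node G) + lc (node G)).sum
      = (uS k + vS k) + (if k = 0 then 1 else 0) := by
  match k with
  | 0 => rw [forests_zero]; simp [lc_node_nil, dp_node_nil, uS_zero, vS_zero]
  | k+1 =>
    simp only [if_neg (Nat.succ_ne_zero k), add_zero]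
    have : ((forests (k+1)).map fun G => dp (node G) + lc (node G)).sum
        = ((forests (k+1)).map fun G => As G + Ds G).sum := by
      refine congrArg List.sum (List.map_congr_left fun G hG => ?_)
      have hs : sizeList G = k+1 := (mem_forests _ _).mp hG
      match G with
      | [] => simp [sizeList] at hs
      | t :: ts => rw [lc_node_cons, dp_node_cons]; omega
    rw [this, sum_map_add]; rw [uS, vS]

lemma uS_succ (m : ℕ) : uS (m+1) = ∑ k ∈ Finset.range (m+1),
    ((uS k + if k = 0 then 1 else 0) * Fn (m-k) + Fn k * uS (m-k)) := by
  rw [uS, sum_forests_succ]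
  refine Finset.sum_congr rfl fun k _ => ?_
  calc ((forests k).map fun G => (((forests (m-k)).map fun f => As (node G :: f)).sum)).sum
      = ((forests k).map fun G => lc (node G) * Fn (m-k) + uS (m-k)).sum := by
        refine congrArg List.sum (List.map_congr_left fun G _ => ?_)
        have : (fun f => As (node G :: f)) = fun f => lc (node G) + As f := rfl
        rw [this, sum_map_add, lmap_const, uS]
        simp only [Fn]
        try ring
    _ = _ := by
        rw [sum_map_add, lmap_mul_right, lmap_const, Lt_eq]
        simp only [Fn]
        try ring

lemma vS_succ (m : ℕ) : vS (m+1) = ∑ k ∈ Finset.range (m+1),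
    (((uS k + vS k) + if k = 0 then 1 else 0) * Fn (m-k) + Fn k * vS (m-k)) := by
  rw [vS, sum_forests_succ]
  refine Finset.sum_congr rfl fun k _ => ?_
  calc ((forests k).map fun G => (((forests (m-k)).map fun f => Ds (node G :: f)).sum)).sum
      = ((forests k).map fun G => (dp (node G) + lc (node G)) * Fn (m-k) + vS (m-k)).sum := by
        refine congrArg List.sum (List.map_congr_left fun G _ => ?_)
        have : (fun f => Ds (node G :: f)) = fun f => (dp (node G) + lc (node G)) + Ds f := rfl
        rw [this, sum_map_add, lmap_const, vS]
        simp only [Fn]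
        try ring
    _ = _ := by
        rw [sum_map_add, lmap_mul_right, lmap_const, Dt_eq]
        simp only [Fn]
        try ring

/-! ### power series -/

open PowerSeries

noncomputable def FF : PowerSeries ℤ := PowerSeries.mk fun m => (Fn m : ℤ)
noncomputable def UU : PowerSeries ℤ := PowerSeries.mk fun m => (uS m : ℤ)
noncomputable def VV : PowerSeries ℤ := PowerSeries.mk fun m => (vS m : ℤ)

lemma E1 : FF = 1 + X * (FF * FF) := by
  ext n
  rw [map_add]
  cases n with
  | zero =>
    simp [FF, Fn_zero, PowerSeries.coeff_zero_eq_constantCoeff]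
  | succ n =>
    rw [PowerSeries.coeff_succ_X_mul, PowerSeries.coeff_one, if_neg (Nat.succ_ne_zero n)]
    rw [PowerSeries.coeff_mul, Finset.Nat.sum_antidiagonal_eq_sum_range_succ_mk]
    simp only [FF, PowerSeries.coeff_mk]
    rw [Fn_succ]
    push_cast
    simp

lemma E2 : UU = X * FF + (X * (UU * FF) + X * (FF * UU)) := by
  ext n
  rw [map_add, map_add]
  cases n with
  | zero =>
    simp [UU, uS_zero, PowerSeries.coeff_zero_eq_constantCoeff]
  | succ n =>
    rw [PowerSeries.coeff_succ_X_mul, PowerSeries.coeff_succ_X_mul, PowerSeries.coeff_succ_X_mul]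
    rw [PowerSeries.coeff_mul, PowerSeries.coeff_mul,
      Finset.Nat.sum_antidiagonal_eq_sum_range_succ_mk,
      Finset.Nat.sum_antidiagonal_eq_sum_range_succ_mk]
    simp only [UU, FF, PowerSeries.coeff_mk]
    rw [uS_succ]
    push_cast
    have split : ∀ k ∈ Finset.range (n+1),
        ((uS k : ℤ) + if k = 0 then 1 else 0) * (Fn (n-k) : ℤ) + (Fn k : ℤ) * (uS (n-k) : ℤ)
        = (if k = 0 then (Fn (n-k) : ℤ) else 0)
          + ((uS k : ℤ) * (Fn (n-k) : ℤ) + (Fn k : ℤ) * (uS (n-k) : ℤ)) := by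
      intro k _
      split <;> ring
    rw [Finset.sum_congr rfl split, Finset.sum_add_distrib,
      Finset.sum_ite_eq' (Finset.range (n+1)) 0 (fun k => (Fn (n - k) : ℤ))]
    simp [Finset.sum_add_distrib]

lemma E3 : VV = X * FF + (X * ((UU + VV) * FF) + X * (FF * VV)) := by
  ext n
  rw [map_add, map_add]
  cases n with
  | zero =>
    simp [VV, vS_zero, PowerSeries.coeff_zero_eq_constantCoeff]
  | succ n =>
    rw [PowerSeries.coeff_succ_X_mul, PowerSeries.coeff_succ_X_mul, PowerSeries.coeff_succ_X_mul]
    rw [PowerSeries.coeff_mul, PowerSeries.coeff_mul,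
      Finset.Nat.sum_antidiagonal_eq_sum_range_succ_mk,
      Finset.Nat.sum_antidiagonal_eq_sum_range_succ_mk]
    simp only [UU, VV, FF, PowerSeries.coeff_mk, map_add]
    rw [vS_succ]
    push_cast
    have split : ∀ k ∈ Finset.range (n+1),
        ((uS k : ℤ) + (vS k : ℤ) + if k = 0 then 1 else 0) * (Fn (n-k) : ℤ)
          + (Fn k : ℤ) * (vS (n-k) : ℤ)
        = (if k = 0 then (Fn (n-k) : ℤ) else 0)
          + (((uS k : ℤ) + (vS k : ℤ)) * (Fn (n-k) : ℤ) + (Fn k : ℤ) * (vS (n-k) : ℤ)) := by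
      intro k _
      split <;> ring
    rw [Finset.sum_congr rfl split, Finset.sum_add_distrib,
      Finset.sum_ite_eq' (Finset.range (n+1)) 0 (fun k => (Fn (n - k) : ℤ))]
    simp [Finset.sum_add_distrib]

lemma keyPS : VV = X + (PowerSeries.C (R := ℤ) 4) * (X * VV) := by
  have e1 := E1
  have e2 := E2
  have e3 := E3
  have h4 : (PowerSeries.C (R := ℤ)) 4 = (4 : PowerSeries ℤ) := by simp
  linear_combination (X + 4*X*VV) * e1 + (X*FF) * e2 + (1 - 2*X*FF) * e3 - (X*VV) * h4

lemma vS_rec (m : ℕ) : (vS (m+1) : ℤ) = (if m = 0 then 1 else 0) + 4 * vS m := by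
  have h := congrArg (PowerSeries.coeff (R := ℤ) (m+1)) keyPS
  rw [map_add, PowerSeries.coeff_X, PowerSeries.coeff_C_mul,
    PowerSeries.coeff_succ_X_mul] at h
  simp only [VV, PowerSeries.coeff_mk] at h
  rw [h]
  by_cases hm : m = 0 <;> simp [hm]

lemma vS_eq (m : ℕ) : vS (m+1) = 4 ^ m := by
  induction m with
  | zero =>
    have := vS_rec 0
    simp [vS_zero] at this
    exact_mod_cast this
  | succ m ih =>
    have h := vS_rec (m+1)
    rw [if_neg (Nat.succ_ne_zero m), ih] at h
    have h2 : (vS (m+2) : ℤ) = 4 ^ (m+1) := by rw [h]; push_cast; ring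
    exact_mod_cast h2

lemma node_injective : Function.Injective node := fun a b h => by injection h

lemma vS_final (m : ℕ) (hm : 1 ≤ m) : vS m = 4 ^ (m - 1) := by
  obtain ⟨k, rfl⟩ := Nat.exists_eq_add_of_le hm
  rw [Nat.add_comm 1 k]
  simpa using vS_eq k

end PlaneTree

theorem total_root_to_leaf_edges_plane_trees (n : ℕ) (hn : 2 ≤ n) :
    (∑ᶠ T : {T : PlaneTree // T.size = n}, ((T.1.leafPositions).map List.length).sum)
      = 4 ^ (n - 2) := by
  open PlaneTree in
  set l : List PlaneTree := (forests (n-1)).map node with hl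
  have hnodup : l.Nodup := (nodup_forests (n-1)).map node_injective
  set S : Finset PlaneTree := ⟨(l : Multiset PlaneTree), by exact hnodup⟩ with hS
  have hset : {T : PlaneTree | T.size = n} = (↑S : Set PlaneTree) := by
    ext T
    simp only [Set.mem_setOf_eq, Finset.coe_mem, Finset.mem_coe]
    constructor
    · intro h
      match T with
      | node g =>
        have hg : sizeList g = n - 1 := by
          have : 1 + sizeList g = n := h
          omega
        show node g ∈ (l : Multiset PlaneTree)
        rw [Multiset.mem_coe, hl]
        exact List.mem_map.mpr ⟨g, (mem_forests _ _).mpr hg, rfl⟩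
    · intro h
      have h' : T ∈ l := by exact Multiset.mem_coe.mp h
      obtain ⟨g, hg, rfl⟩ := List.mem_map.mp h'
      have : sizeList g = n - 1 := (mem_forests _ _).mp hg
      show 1 + sizeList g = n
      omega
  have step1 : (∑ᶠ T : {T : PlaneTree // T.size = n}, dp T.1) = ∑ᶠ T ∈ {T : PlaneTree | T.size = n}, dp T :=
    finsum_subtype_eq_finsum_cond (f := dp) (fun T => T.size = n)
  have step2 : (∑ᶠ T ∈ {T : PlaneTree | T.size = n}, dp T) = ∑ T ∈ S, dp T := by
    rw [hset]
    exact finsum_mem_coe_finset dp S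
  have step3 : (∑ T ∈ S, dp T) = (l.map dp).sum := by
    show ((l : Multiset PlaneTree).map dp).sum = _
    simp only [Multiset.map_coe, Multiset.sum_coe]
  have step4 : (l.map dp).sum = vS (n-1) := by
    rw [hl, List.map_map, vS]
    refine congrArg List.sum (List.map_congr_left fun g hg => ?_)
    have hs : sizeList g = n - 1 := (mem_forests _ _).mp hg
    match g with
    | [] => simp [sizeList] at hs; omega
    | t :: ts => exact dp_node_cons t ts
  show (∑ᶠ T : {T : PlaneTree // T.size = n}, dp T.1) = 4 ^ (n-2)
  rw [step1, step2, step3, step4, vS_final (n-1) (by omega)]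
  congr 1
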